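/- Suppose s ∈ S and v ∈ V are such that there exist m ≥ 1 and pairwise distinct vertices s = s_1, s_2, …, s_m ∈ S with d_{G,w}(s,v) = Σ_{i=2}^{m} d_{G,w}(s_{i−1},s_i) + d_{G,w}(s_m,v), such that for each i ∈ [2,m] some minimum-length path in (G,w) between s_{i−1} and s_i has at most ℓ edges, some minimum-length path in (G,w) between s_m and v has at most ℓ edges, and some minimum-w''_S-length path in (G''_S,w''_S) between s and s_m has at most 4|S|/k edges. Then d̃_{G,w,S}(s,v) ≤ (1+ε)²·d_{G,w}(s,v). -/

import Mathlib

open scoped ENNReal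

/-- The length of a walk with respect to real edge weights (summed as `ℝ≥0∞`
via `ENNReal.ofReal`). -/
noncomputable def wlen {V : Type*} (G : SimpleGraph V) (w : V → V → ℝ) {u v : V}
    (p : G.Walk u v) : ℝ≥0∞ :=
  (p.darts.map fun d => ENNReal.ofReal (w d.toProd.1 d.toProd.2)).sum

/-- The weighted distance: the infimum of walk lengths (`∞` if `u` and `v` are not
connected, `0` if `u = v`). -/
noncomputable def wdist {V : Type*} (G : SimpleGraph V) (w : V → V → ℝ) (u v : V) : ℝ≥0∞ :=
  ⨅ p : G.Walk u v, wlen G w p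

/-- The rounded weights `μ^{(L)}_i(e) = ⌈2L·μ(e)/(ε·2^i)⌉` (natural numbers, viewed as
real weights). -/
noncomputable def wround {V : Type*} (w : V → V → ℝ) (ε L : ℝ) (i : ℕ) : V → V → ℝ :=
  fun u v => (⌈2 * L * w u v / (ε * 2 ^ i)⌉₊ : ℝ)

/-- The approximate `L`-hop distance `d̃^L_{H,μ}(u,v)`: the minimum over integers `i ≥ 0`
with `d_{H,μ^{(L)}_i}(u,v) ≤ (1+2/ε)·L` of `d_{H,μ^{(L)}_i}(u,v)·ε·2^i/(2L)`, and `∞` if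
no such `i` exists. -/
noncomputable def dtilde {V : Type*} (G : SimpleGraph V) (w : V → V → ℝ) (ε L : ℝ)
    (u v : V) : ℝ≥0∞ :=
  ⨅ (i : ℕ) (_ : wdist G (wround w ε L i) u v ≤ ENNReal.ofReal ((1 + 2 / ε) * L)),
    wdist G (wround w ε L i) u v * ENNReal.ofReal (ε * 2 ^ i / (2 * L))

/-- The weights `w'_S({u,v}) = d̃^ℓ_{G,w}(u,v)` of the complete graph `(G'_S, w'_S)` on `S`
(as real numbers; the relevant values are assumed finite). -/
noncomputable def skelW {V : Type*} (G : SimpleGraph V) (w : V → V → ℝ) (ε : ℝ) (ℓ : ℕ)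
    (S : Finset V) : {x // x ∈ S} → {x // x ∈ S} → ℝ :=
  fun u v => (dtilde G w ε (ℓ : ℝ) (u : V) (v : V)).toReal

/-- The weights `w''_S` of the `k`-shortcut graph `(G''_S, w''_S)` on `S`:
`w''_S({u,v}) = d_{G'_S,w'_S}(u,v)` if `u ∈ N^k_S(v)` or `v ∈ N^k_S(u)`, and
`w''_S({u,v}) = w'_S({u,v})` otherwise. -/
noncomputable def skelW2 {V : Type*} [DecidableEq V] (G : SimpleGraph V) (w : V → V → ℝ)
    (ε : ℝ) (ℓ : ℕ) (S : Finset V) (N : {x // x ∈ S} → Finset {x // x ∈ S}) :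
    {x // x ∈ S} → {x // x ∈ S} → ℝ :=
  fun u v => if u ∈ N v ∨ v ∈ N u
    then (wdist (⊤ : SimpleGraph {x // x ∈ S}) (skelW G w ε ℓ S) u v).toReal
    else skelW G w ε ℓ S u v

/-- The approximate distance
`d̃_{G,w,S}(s,v) = min_{u ∈ S} ( d̃^{4|S|/k}_{G''_S,w''_S}(s,u) + d̃^ℓ_{G,w}(u,v) )`. -/
noncomputable def approxDist {V : Type*} [DecidableEq V] (G : SimpleGraph V)
    (w : V → V → ℝ) (ε : ℝ) (ℓ : ℕ) (S : Finset V) (k : ℕ)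
    (N : {x // x ∈ S} → Finset {x // x ∈ S}) (s : {x // x ∈ S}) (v : V) : ℝ≥0∞ :=
  ⨅ u : {x // x ∈ S},
    dtilde (⊤ : SimpleGraph {x // x ∈ S}) (skelW2 G w ε ℓ S N) ε
        (4 * (S.card : ℝ) / (k : ℝ)) s u +
      dtilde G w ε (ℓ : ℝ) (u : V) v

section Aux

variable {V : Type*} {G : SimpleGraph V} {w : V → V → ℝ}

lemma wlen_nil {u : V} : wlen G w (SimpleGraph.Walk.nil : G.Walk u u) = 0 := by
  simp [wlen]

lemma wlen_cons {u x v : V} (h : G.Adj u x) (p : G.Walk x v) :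
    wlen G w (SimpleGraph.Walk.cons h p) = ENNReal.ofReal (w u x) + wlen G w p := by
  simp [wlen]

lemma wlen_append {u x v : V} (p : G.Walk u x) (q : G.Walk x v) :
    wlen G w (p.append q) = wlen G w p + wlen G w q := by
  simp [wlen, SimpleGraph.Walk.darts_append]

lemma wdist_le_wlen {u v : V} (p : G.Walk u v) : wdist G w u v ≤ wlen G w p :=
  iInf_le _ p

lemma wdist_self_le (u : V) : wdist G w u u ≤ 0 :=
  (wdist_le_wlen SimpleGraph.Walk.nil).trans_eq wlen_nil

lemma wdist_triangle (u x v : V) :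
    wdist G w u v ≤ wdist G w u x + wdist G w x v := by
  have h : wdist G w u x + wdist G w x v =
      ⨅ (p : G.Walk u x) (q : G.Walk x v), (wlen G w p + wlen G w q) := by
    rw [wdist, wdist, ENNReal.iInf_add]
    exact iInf_congr fun p => ENNReal.add_iInf
  rw [h]
  exact le_iInf fun p => le_iInf fun q =>
    (wdist_le_wlen (p.append q)).trans_eq (wlen_append p q)

lemma ofReal_le_wdist {c : ℝ} (hw : ∀ a b, G.Adj a b → c ≤ w a b)
    {u v : V} (huv : u ≠ v) : ENNReal.ofReal c ≤ wdist G w u v := by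
  refine le_iInf fun p => ?_
  cases p with
  | nil => exact absurd rfl huv
  | cons h q =>
    rw [wlen_cons]
    exact le_trans (ENNReal.ofReal_le_ofReal (hw _ _ h)) le_self_add

lemma wdist_le_ofReal_edge {u v : V} (h : G.Adj u v) :
    wdist G w u v ≤ ENNReal.ofReal (w u v) := by
  refine (wdist_le_wlen (SimpleGraph.Walk.cons h SimpleGraph.Walk.nil)).trans ?_
  rw [wlen_cons, wlen_nil, add_zero]

lemma ofReal_list_sum {α : Type*} (f : α → ℝ) (l : List α) (h : ∀ x ∈ l, 0 ≤ f x) :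
    (l.map fun x => ENNReal.ofReal (f x)).sum = ENNReal.ofReal ((l.map f).sum) := by
  induction l with
  | nil => simp
  | cons a t ih =>
    have ht : ∀ x ∈ t, 0 ≤ f x := fun x hx => h x (List.mem_cons_of_mem _ hx)
    have hs : 0 ≤ (t.map f).sum := by
      refine List.sum_nonneg fun x hx => ?_
      obtain ⟨y, hy, rfl⟩ := List.mem_map.1 hx
      exact ht y hy
    simp only [List.map_cons, List.sum_cons, ih ht,
      ENNReal.ofReal_add (h a (List.mem_cons_self)) hs]

lemma list_sum_le_sum {α : Type*} {f g : α → ℝ} {l : List α} (h : ∀ x ∈ l, f x ≤ g x) :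
    (l.map f).sum ≤ (l.map g).sum := by
  induction l with
  | nil => simp
  | cons a t ih =>
    simp only [List.map_cons, List.sum_cons]
    exact add_le_add (h a (List.mem_cons_self))
      (ih fun x hx => h x (List.mem_cons_of_mem _ hx))

lemma list_sum_affine {α : Type*} (c : ℝ) (f : α → ℝ) (l : List α) :
    (l.map fun x => c * f x + 1).sum = c * (l.map f).sum + l.length := by
  induction l with
  | nil => simp
  | cons a t ih =>
    simp only [List.map_cons, List.sum_cons, List.length_cons, ih]
    push_cast
    ring

lemma list_card_le_sum {l : List ℝ} (h : ∀ x ∈ l, 1 ≤ x) : (l.length : ℝ) ≤ l.sum := by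
  induction l with
  | nil => simp
  | cons a t ih =>
    simp only [List.length_cons, List.sum_cons]
    push_cast
    have h1 := h a (List.mem_cons_self)
    have h2 := ih fun x hx => h x (List.mem_cons_of_mem _ hx)
    linarith

lemma one_le_dtilde (hw : ∀ a b, G.Adj a b → 1 ≤ w a b) {ε L : ℝ}
    (hε : 0 < ε) (hL : 0 < L) {u v : V} (huv : u ≠ v) :
    1 ≤ dtilde G w ε L u v := by
  rw [dtilde]
  refine le_iInf fun i => le_iInf fun _ => ?_
  have h2 : (0:ℝ) < ε * 2 ^ i := by positivity
  have key : ENNReal.ofReal (2 * L / (ε * 2 ^ i)) ≤ wdist G (wround w ε L i) u v := by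
    refine ofReal_le_wdist (fun a b hab => ?_) huv
    have hwab := hw a b hab
    calc 2 * L / (ε * 2 ^ i) ≤ 2 * L * w a b / (ε * 2 ^ i) := by
          apply div_le_div_of_nonneg_right ?_ h2.le
          nlinarith
      _ ≤ _ := Nat.le_ceil _
  have hone : (1:ℝ≥0∞) =
      ENNReal.ofReal (2 * L / (ε * 2 ^ i)) * ENNReal.ofReal (ε * 2 ^ i / (2 * L)) := by
    rw [← ENNReal.ofReal_mul (by positivity),
      show 2 * L / (ε * 2 ^ i) * (ε * 2 ^ i / (2 * L)) = 1 by field_simp]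
    exact ENNReal.ofReal_one.symm
  rw [hone]
  exact mul_le_mul_left key _

lemma dtilde_le_of_walk (hw : ∀ a b, G.Adj a b → 1 ≤ w a b) {ε L : ℝ}
    (hε : 0 < ε) (hL : 1 ≤ L) {u v : V} (p : G.Walk u v)
    (hlen : (p.length : ℝ) ≤ L) (hmin : wlen G w p = wdist G w u v) :
    dtilde G w ε L u v ≤ ENNReal.ofReal (1 + ε) * wdist G w u v := by
  have hL0 : (0:ℝ) < L := lt_of_lt_of_le one_pos hL
  have hdw : ∀ d ∈ p.darts, 1 ≤ w d.toProd.1 d.toProd.2 := fun d _ => hw _ _ d.adj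
  set D : ℝ := (p.darts.map fun d => w d.toProd.1 d.toProd.2).sum with hDdef
  have hwlen : wlen G w p = ENNReal.ofReal D := by
    rw [wlen, ofReal_list_sum (fun d => w d.toProd.1 d.toProd.2) p.darts
      (fun d hd => by linarith [hdw d hd])]
  rcases Nat.eq_zero_or_pos p.length with h0 | hpos
  · -- degenerate case: the walk has no edges
    have hd : p.darts = [] := List.length_eq_zero_iff.1 (by rw [SimpleGraph.Walk.length_darts, h0])
    have hz0 : wdist G (wround w ε L 0) u v = 0 :=
      le_antisymm ((wdist_le_wlen p).trans (by rw [wlen, hd]; simp)) zero_le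
    have hcond : wdist G (wround w ε L 0) u v ≤ ENNReal.ofReal ((1 + 2 / ε) * L) := by
      rw [hz0]; exact zero_le
    calc dtilde G w ε L u v
        ≤ wdist G (wround w ε L 0) u v * ENNReal.ofReal (ε * 2 ^ (0:ℕ) / (2 * L)) := by
          rw [dtilde]; exact iInf_le_of_le 0 (iInf_le _ hcond)
      _ = 0 := by rw [hz0, zero_mul]
      _ ≤ _ := zero_le
  · -- main case
    have hD1 : 1 ≤ D := by
      have hcard := list_card_le_sum (l := p.darts.map fun d => w d.toProd.1 d.toProd.2)
        (by intro x hx; obtain ⟨d, hd, rfl⟩ := List.mem_map.1 hx; exact hdw d hd)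
      rw [List.length_map, SimpleGraph.Walk.length_darts] at hcard
      have hp1 : (1:ℝ) ≤ (p.length : ℝ) := by exact_mod_cast hpos
      linarith
    have hD0 : (0:ℝ) ≤ D := by linarith
    set i : ℕ := Nat.clog 2 ⌈D⌉₊ with hidef
    have h2i : D ≤ 2 ^ i := by
      calc D ≤ (⌈D⌉₊ : ℝ) := Nat.le_ceil D
        _ ≤ ((2 ^ i : ℕ) : ℝ) := by exact_mod_cast Nat.le_pow_clog one_lt_two _
        _ = 2 ^ i := by push_cast; ring
    have h2i' : (2:ℝ) ^ i ≤ 2 * D := by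
      rcases Nat.eq_zero_or_pos i with hi0 | hipos
      · rw [hi0]; norm_num; linarith
      · have hc2 : 2 ≤ ⌈D⌉₊ := by
          by_contra hlt
          push_neg at hlt
          have : Nat.clog 2 ⌈D⌉₊ = 0 := Nat.clog_of_right_le_one (by omega) 2
          omega
        have hp : (2:ℕ) ^ (i - 1) < ⌈D⌉₊ := by
          have := Nat.pow_pred_clog_lt_self one_lt_two (x := ⌈D⌉₊) (by omega)
          simpa [hidef, Nat.pred_eq_sub_one] using this
        have h2 : (2:ℝ) ^ (i - 1) ≤ D := by
          have hnat : (2:ℕ) ^ (i - 1) + 1 ≤ ⌈D⌉₊ := hp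
          have hr : (2:ℝ) ^ (i - 1) + 1 ≤ (⌈D⌉₊ : ℝ) := by exact_mod_cast hnat
          linarith [Nat.ceil_lt_add_one hD0]
        have hi1 : i - 1 + 1 = i := Nat.succ_pred_eq_of_pos hipos
        calc (2:ℝ) ^ i = 2 ^ (i - 1 + 1) := by rw [hi1]
          _ = 2 * 2 ^ (i - 1) := by rw [pow_succ']
          _ ≤ 2 * D := by linarith
    have h2ipos : (0:ℝ) < 2 ^ i := by positivity
    set A : ℝ := 2 * L / (ε * 2 ^ i) with hAdef
    have hA0 : 0 < A := by positivity
    set c : ℝ := ε * 2 ^ i / (2 * L) with hcdef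
    have hc0 : 0 ≤ c := by positivity
    set R : ℝ := (p.darts.map fun d => wround w ε L i d.toProd.1 d.toProd.2).sum with hRdef
    have hR0 : 0 ≤ R := by
      refine List.sum_nonneg fun x hx => ?_
      obtain ⟨d, hd, rfl⟩ := List.mem_map.1 hx
      exact Nat.cast_nonneg _
    have hwr : wlen G (wround w ε L i) p = ENNReal.ofReal R := by
      rw [wlen, ofReal_list_sum (fun d => wround w ε L i d.toProd.1 d.toProd.2) p.darts
        (fun d _ => Nat.cast_nonneg _)]
    have hRle : R ≤ A * D + p.length := by
      have hpt : ∀ d ∈ p.darts,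
          wround w ε L i d.toProd.1 d.toProd.2 ≤ A * w d.toProd.1 d.toProd.2 + 1 := by
        intro d hd
        have h1 := hdw d hd
        have hnn : 0 ≤ 2 * L * w d.toProd.1 d.toProd.2 / (ε * 2 ^ i) := by positivity
        have hceil := Nat.ceil_lt_add_one hnn
        have heq : 2 * L * w d.toProd.1 d.toProd.2 / (ε * 2 ^ i) =
            A * w d.toProd.1 d.toProd.2 := by rw [hAdef]; ring
        rw [wround]
        linarith [heq ▸ hceil]
      calc R ≤ (p.darts.map fun d => A * w d.toProd.1 d.toProd.2 + 1).sum :=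
            list_sum_le_sum hpt
        _ = A * D + p.darts.length := list_sum_affine A _ _
        _ = A * D + p.length := by rw [SimpleGraph.Walk.length_darts]
    have hAD : A * D ≤ 2 * L / ε := by
      have h1 : A * D ≤ A * 2 ^ i := mul_le_mul_of_nonneg_left h2i hA0.le
      have h2 : A * 2 ^ i = 2 * L / ε := by
        rw [hAdef]
        field_simp
      linarith
    have hRle2 : R ≤ A * D + L := by linarith
    have hcond : wdist G (wround w ε L i) u v ≤ ENNReal.ofReal ((1 + 2 / ε) * L) := by
      refine (wdist_le_wlen p).trans ?_
      rw [hwr]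
      refine ENNReal.ofReal_le_ofReal ?_
      have : (1 + 2 / ε) * L = L + 2 * L / ε := by field_simp
      linarith
    have hreal : R * c ≤ (1 + ε) * D := by
      have h5 : R * c ≤ (A * D + L) * c := mul_le_mul_of_nonneg_right hRle2 hc0
      have h6 : (A * D + L) * c = D + ε * 2 ^ i / 2 := by
        rw [hAdef, hcdef]
        field_simp
      have h7 : ε * 2 ^ i ≤ ε * (2 * D) := mul_le_mul_of_nonneg_left h2i' hε.le
      nlinarith
    calc dtilde G w ε L u v
        ≤ wdist G (wround w ε L i) u v * ENNReal.ofReal c := by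
          rw [dtilde]; exact iInf_le_of_le i (iInf_le _ hcond)
      _ ≤ ENNReal.ofReal R * ENNReal.ofReal c :=
          mul_le_mul_left ((wdist_le_wlen p).trans_eq hwr) _
      _ = ENNReal.ofReal (R * c) := (ENNReal.ofReal_mul hR0).symm
      _ ≤ ENNReal.ofReal ((1 + ε) * D) := ENNReal.ofReal_le_ofReal hreal
      _ = ENNReal.ofReal (1 + ε) * ENNReal.ofReal D := ENNReal.ofReal_mul (by linarith)
      _ = ENNReal.ofReal (1 + ε) * wdist G w u v := by rw [← hwlen, hmin]

end Aux

/-- Suppose `s ∈ S` and `v ∈ V` are such that there exist `m ≥ 1` and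
pairwise distinct vertices `s = s_1, …, s_m ∈ S` (here `σ 0, …, σ (m-1)`) with
`d_{G,w}(s,v) = Σ_{i=2}^m d_{G,w}(s_{i−1},s_i) + d_{G,w}(s_m,v)`, such that each
consecutive pair is joined by a minimum-length path with at most `ℓ` edges, `s_m` and `v`
are joined by a minimum-length path with at most `ℓ` edges, and `s` and `s_m` are joined
in `(G''_S,w''_S)` by a minimum-`w''_S`-length path with at most `4|S|/k` edges.  Then
`d̃_{G,w,S}(s,v) ≤ (1+ε)²·d_{G,w}(s,v)`. -/
theorem stmt12 {V : Type*} [Fintype V] [DecidableEq V]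
    (G : SimpleGraph V) (hconn : G.Connected)
    (w : V → V → ℝ) (hsymm : ∀ u v, w u v = w v u) (hge1 : ∀ u v, G.Adj u v → 1 ≤ w u v)
    (ε : ℝ) (hε : 0 < ε) (ℓ : ℕ) (hℓ : 1 ≤ ℓ)
    (S : Finset V) (k : ℕ) (hk1 : 1 ≤ k) (hk2 : k ≤ S.card - 1)
    (hfin : ∀ u v : {x // x ∈ S}, dtilde G w ε (ℓ : ℝ) (u : V) (v : V) ≠ ⊤)
    (N : {x // x ∈ S} → Finset {x // x ∈ S})
    (hNself : ∀ v, v ∉ N v) (hNcard : ∀ v, (N v).card = k)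
    (hNnear : ∀ v, ∀ u ∈ N v, ∀ z, z ∉ N v → z ≠ v →
      wdist (⊤ : SimpleGraph {x // x ∈ S}) (skelW G w ε ℓ S) v u ≤
        wdist (⊤ : SimpleGraph {x // x ∈ S}) (skelW G w ε ℓ S) v z)
    (s : {x // x ∈ S}) (v : V)
    (m : ℕ) (hm : 1 ≤ m) (σ : ℕ → V)
    (hσ0 : σ 0 = (s : V))
    (hσS : ∀ i < m, σ i ∈ S)
    (hσinj : ∀ i < m, ∀ j < m, σ i = σ j → i = j)
    (hdecomp : wdist G w (s : V) v =
      (∑ i ∈ Finset.range (m - 1), wdist G w (σ i) (σ (i + 1))) + wdist G w (σ (m - 1)) v)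
    (hhop : ∀ i, i + 1 < m → ∃ p : G.Walk (σ i) (σ (i + 1)),
      wlen G w p = wdist G w (σ i) (σ (i + 1)) ∧ p.length ≤ ℓ)
    (htail : ∃ p : G.Walk (σ (m - 1)) v,
      wlen G w p = wdist G w (σ (m - 1)) v ∧ p.length ≤ ℓ)
    (hshort : ∃ p : (⊤ : SimpleGraph {x // x ∈ S}).Walk s
        ⟨σ (m - 1), hσS (m - 1) (Nat.sub_lt hm Nat.one_pos)⟩,
      wlen (⊤ : SimpleGraph {x // x ∈ S}) (skelW2 G w ε ℓ S N) p =
        wdist (⊤ : SimpleGraph {x // x ∈ S}) (skelW2 G w ε ℓ S N) s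
          ⟨σ (m - 1), hσS (m - 1) (Nat.sub_lt hm Nat.one_pos)⟩ ∧
      (p.length : ℝ) ≤ 4 * (S.card : ℝ) / (k : ℝ)) :
    approxDist G w ε ℓ S k N s v ≤
      ENNReal.ofReal ((1 + ε) ^ 2) * wdist G w (s : V) v := by
  classical
  have hℓR : (1:ℝ) ≤ (ℓ : ℝ) := by exact_mod_cast hℓ
  have hℓ0 : (0:ℝ) < (ℓ : ℝ) := by linarith
  have hSk : k + 1 ≤ S.card := by omega
  have hkR : (0:ℝ) < (k : ℝ) := by exact_mod_cast hk1
  have hL' : (1:ℝ) ≤ 4 * (S.card : ℝ) / (k : ℝ) := by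
    rw [le_div_iff₀ hkR]
    have h1 : (k : ℝ) + 1 ≤ (S.card : ℝ) := by exact_mod_cast hSk
    linarith
  set t : {x // x ∈ S} := ⟨σ (m - 1), hσS (m - 1) (Nat.sub_lt hm Nat.one_pos)⟩ with htdef
  have ht : (t : V) = σ (m - 1) := rfl
  -- the skeleton weights are at least 1
  have hskel1 : ∀ a b : {x // x ∈ S}, a ≠ b → 1 ≤ skelW G w ε ℓ S a b := by
    intro a b hab
    have hVne : (a : V) ≠ (b : V) := fun h => hab (Subtype.ext h)
    have hd1 : 1 ≤ dtilde G w ε (ℓ : ℝ) (a : V) (b : V) :=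
      one_le_dtilde hge1 hε hℓ0 hVne
    have := ENNReal.toReal_mono (hfin a b) hd1
    simpa [skelW] using this
  have hw2ge1 : ∀ a b : {x // x ∈ S}, (⊤ : SimpleGraph {x // x ∈ S}).Adj a b →
      1 ≤ skelW2 G w ε ℓ S N a b := by
    intro a b hab
    have hne : a ≠ b := hab.ne
    rw [skelW2]
    split_ifs with h
    · have h1 : (1:ℝ≥0∞) ≤ wdist (⊤ : SimpleGraph {x // x ∈ S}) (skelW G w ε ℓ S) a b := by
        have := ofReal_le_wdist (G := (⊤ : SimpleGraph {x // x ∈ S}))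
          (w := skelW G w ε ℓ S) (c := 1) (fun x y hxy => hskel1 x y hxy.ne) hne
        simpa using this
      have h2 : wdist (⊤ : SimpleGraph {x // x ∈ S}) (skelW G w ε ℓ S) a b ≠ ⊤ := by
        refine ne_top_of_le_ne_top ?_ (wdist_le_ofReal_edge (by simpa using hne))
        exact ENNReal.ofReal_ne_top
      have := ENNReal.toReal_mono h2 h1
      simpa using this
    · exact hskel1 a b hne
  -- the shortcut-graph weights are dominated by dtilde
  have hle : ∀ a b : {x // x ∈ S}, a ≠ b →
      ENNReal.ofReal (skelW2 G w ε ℓ S N a b) ≤ dtilde G w ε (ℓ : ℝ) (a : V) (b : V) := by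
    intro a b hab
    have hmain : ENNReal.ofReal (skelW G w ε ℓ S a b) = dtilde G w ε (ℓ : ℝ) (a : V) (b : V) := by
      rw [skelW, ENNReal.ofReal_toReal (hfin a b)]
    rw [skelW2]
    split_ifs with h
    · calc ENNReal.ofReal (wdist (⊤ : SimpleGraph {x // x ∈ S}) (skelW G w ε ℓ S) a b).toReal
          ≤ wdist (⊤ : SimpleGraph {x // x ∈ S}) (skelW G w ε ℓ S) a b :=
            ENNReal.ofReal_toReal_le
        _ ≤ ENNReal.ofReal (skelW G w ε ℓ S a b) := wdist_le_ofReal_edge (by simpa using hab)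
        _ = _ := hmain
    · exact hmain.le
  -- the path through the skeleton
  set τ : ℕ → {x // x ∈ S} := fun j => if h : j < m then ⟨σ j, hσS j h⟩ else s with hτdef
  have hτ : ∀ j, ∀ h : j < m, (τ j : V) = σ j := by
    intro j h
    simp [hτdef, h]
  have hτ0 : τ 0 = s := by
    have h0 : 0 < m := hm
    apply Subtype.ext
    rw [hτ 0 h0, hσ0]
  have hτm : τ (m - 1) = t := by
    apply Subtype.ext
    rw [hτ (m - 1) (Nat.sub_lt hm Nat.one_pos), ht]
  have key : ∀ j, j < m →
      wdist (⊤ : SimpleGraph {x // x ∈ S}) (skelW2 G w ε ℓ S N) s (τ j) ≤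
        ∑ i ∈ Finset.range j, dtilde G w ε (ℓ : ℝ) (σ i) (σ (i + 1)) := by
    intro j
    induction j with
    | zero =>
      intro _
      rw [hτ0]
      simpa using wdist_self_le (G := (⊤ : SimpleGraph {x // x ∈ S}))
        (w := skelW2 G w ε ℓ S N) s
    | succ j ih =>
      intro hj1
      have hjm : j < m := by omega
      have hne : τ j ≠ τ (j + 1) := by
        intro h
        have hσeq : σ j = σ (j + 1) := by
          rw [← hτ j hjm, ← hτ (j + 1) hj1, h]
        have := hσinj j hjm (j + 1) hj1 hσeq
        omega
      have hstep : ENNReal.ofReal (skelW2 G w ε ℓ S N (τ j) (τ (j + 1))) ≤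
          dtilde G w ε (ℓ : ℝ) (σ j) (σ (j + 1)) := by
        have := hle (τ j) (τ (j + 1)) hne
        rwa [hτ j hjm, hτ (j + 1) hj1] at this
      calc wdist (⊤ : SimpleGraph {x // x ∈ S}) (skelW2 G w ε ℓ S N) s (τ (j + 1))
          ≤ wdist (⊤ : SimpleGraph {x // x ∈ S}) (skelW2 G w ε ℓ S N) s (τ j) +
            wdist (⊤ : SimpleGraph {x // x ∈ S}) (skelW2 G w ε ℓ S N) (τ j) (τ (j + 1)) :=
            wdist_triangle _ _ _
        _ ≤ (∑ i ∈ Finset.range j, dtilde G w ε (ℓ : ℝ) (σ i) (σ (i + 1))) +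
            ENNReal.ofReal (skelW2 G w ε ℓ S N (τ j) (τ (j + 1))) :=
            add_le_add (ih hjm) (wdist_le_ofReal_edge (by simpa using hne))
        _ ≤ (∑ i ∈ Finset.range j, dtilde G w ε (ℓ : ℝ) (σ i) (σ (i + 1))) +
            dtilde G w ε (ℓ : ℝ) (σ j) (σ (j + 1)) := add_le_add_right hstep _
        _ = ∑ i ∈ Finset.range (j + 1), dtilde G w ε (ℓ : ℝ) (σ i) (σ (i + 1)) :=
            (Finset.sum_range_succ _ _).symm
  -- each hop is well approximated
  have hmid : ∀ i, i + 1 < m → dtilde G w ε (ℓ : ℝ) (σ i) (σ (i + 1)) ≤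
      ENNReal.ofReal (1 + ε) * wdist G w (σ i) (σ (i + 1)) := by
    intro i hi
    obtain ⟨p, hp1, hp2⟩ := hhop i hi
    exact dtilde_le_of_walk hge1 hε hℓR p (by exact_mod_cast hp2) hp1
  have key2 : wdist (⊤ : SimpleGraph {x // x ∈ S}) (skelW2 G w ε ℓ S N) s t ≤
      ENNReal.ofReal (1 + ε) * ∑ i ∈ Finset.range (m - 1), wdist G w (σ i) (σ (i + 1)) := by
    calc wdist (⊤ : SimpleGraph {x // x ∈ S}) (skelW2 G w ε ℓ S N) s t
        = wdist (⊤ : SimpleGraph {x // x ∈ S}) (skelW2 G w ε ℓ S N) s (τ (m - 1)) := by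
          rw [hτm]
      _ ≤ ∑ i ∈ Finset.range (m - 1), dtilde G w ε (ℓ : ℝ) (σ i) (σ (i + 1)) :=
          key (m - 1) (Nat.sub_lt hm Nat.one_pos)
      _ ≤ ∑ i ∈ Finset.range (m - 1), ENNReal.ofReal (1 + ε) * wdist G w (σ i) (σ (i + 1)) := by
          refine Finset.sum_le_sum fun i hi => ?_
          exact hmid i (by have := Finset.mem_range.1 hi; omega)
      _ = ENNReal.ofReal (1 + ε) * ∑ i ∈ Finset.range (m - 1), wdist G w (σ i) (σ (i + 1)) :=
          (Finset.mul_sum _ _ _).symm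
  -- the shortcut path is well approximated
  have dshort : dtilde (⊤ : SimpleGraph {x // x ∈ S}) (skelW2 G w ε ℓ S N) ε
      (4 * (S.card : ℝ) / (k : ℝ)) s t ≤
      ENNReal.ofReal (1 + ε) * wdist (⊤ : SimpleGraph {x // x ∈ S}) (skelW2 G w ε ℓ S N) s t := by
    obtain ⟨p, hp1, hp2⟩ := hshort
    exact dtilde_le_of_walk hw2ge1 hε hL' p hp2 hp1
  have dtail : dtilde G w ε (ℓ : ℝ) (σ (m - 1)) v ≤
      ENNReal.ofReal (1 + ε) * wdist G w (σ (m - 1)) v := by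
    obtain ⟨p, hp1, hp2⟩ := htail
    exact dtilde_le_of_walk hge1 hε hℓR p (by exact_mod_cast hp2) hp1
  -- combine
  set E : ℝ≥0∞ := ENNReal.ofReal (1 + ε) with hEdef
  have hE1 : (1:ℝ≥0∞) ≤ E := by
    rw [hEdef]
    exact ENNReal.one_le_ofReal.2 (by linarith)
  have h1 : approxDist G w ε ℓ S k N s v ≤
      dtilde (⊤ : SimpleGraph {x // x ∈ S}) (skelW2 G w ε ℓ S N) ε
        (4 * (S.card : ℝ) / (k : ℝ)) s t + dtilde G w ε (ℓ : ℝ) (σ (m - 1)) v := by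
    rw [approxDist]
    exact iInf_le _ t
  calc approxDist G w ε ℓ S k N s v
      ≤ dtilde (⊤ : SimpleGraph {x // x ∈ S}) (skelW2 G w ε ℓ S N) ε
          (4 * (S.card : ℝ) / (k : ℝ)) s t + dtilde G w ε (ℓ : ℝ) (σ (m - 1)) v := h1
    _ ≤ E * (E * ∑ i ∈ Finset.range (m - 1), wdist G w (σ i) (σ (i + 1))) +
        E * wdist G w (σ (m - 1)) v :=
        add_le_add (dshort.trans (mul_le_mul_right key2 _)) dtail
    _ ≤ E * E * (∑ i ∈ Finset.range (m - 1), wdist G w (σ i) (σ (i + 1))) +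
        E * E * wdist G w (σ (m - 1)) v := by
        refine add_le_add (le_of_eq (mul_assoc _ _ _).symm) ?_
        rw [mul_assoc]
        exact mul_le_mul_right (le_mul_of_one_le_left' hE1) E
    _ = E * E * ((∑ i ∈ Finset.range (m - 1), wdist G w (σ i) (σ (i + 1))) +
        wdist G w (σ (m - 1)) v) := (mul_add _ _ _).symm
    _ = ENNReal.ofReal ((1 + ε) ^ 2) * wdist G w (s : V) v := by
        rw [← hdecomp, hEdef, ← ENNReal.ofReal_mul (by linarith),
          show (1 + ε) * (1 + ε) = (1 + ε) ^ 2 by ring]
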